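/- If v is a free vertex of a finite simple graph G (i.e., v belongs to exactly one maximal clique of G), then v does not belong to any cut set S of G, where a nonempty set S of vertices is a cut set if removing any vertex of S from S strictly decreases the number of connected components of the induced subgraph on the complement. -/

import Mathlib

open SimpleGraph Finset

/-- Number of connected components of the subgraph of `G` induced on the complement of `S`. -/
noncomputable def numComp {V : Type*} [Fintype V] (G : SimpleGraph V) (S : Finset V) : ℕ :=
  Nat.card (G.induce ((↑S : Set V)ᶜ)).ConnectedComponent

/-- `S` is a cut set of `G`: either `S = ∅`, or `S ≠ ∅` and removing any vertex of `S`
from `S` strictly decreases the number of connected components of the induced subgraph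
on the complement. -/
def IsCutSet {V : Type*} [Fintype V] [DecidableEq V] (G : SimpleGraph V) (S : Finset V) : Prop :=
  S = ∅ ∨ (S ≠ ∅ ∧ ∀ i ∈ S, numComp G (S.erase i) < numComp G S)

/-- every clique extends to a maximal one -/
lemma exists_maximal_clique {V : Type*} (G : SimpleGraph V) (c : Set V) (hc : G.IsClique c) :
    ∃ m, c ⊆ m ∧ G.IsClique m ∧ ∀ D : Set V, G.IsClique D → m ⊆ D → D = m := by
  obtain ⟨m, hcm, hm⟩ := zorn_subset_nonempty {D : Set V | G.IsClique D} (fun ch hch hchain _ => by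
    refine ⟨⋃₀ ch, ?_, fun s hs => Set.subset_sUnion_of_mem hs⟩
    intro x hx y hy hxy
    obtain ⟨D1, hD1, hxD⟩ := hx
    obtain ⟨D2, hD2, hyD⟩ := hy
    rcases hchain.total hD1 hD2 with h | h
    · exact hch hD2 (h hxD) hyD hxy
    · exact hch hD1 hxD (h hyD) hxy) c hc
  exact ⟨m, hcm, hm.1, fun D hD hmD => (hm.2 hD hmD).antisymm hmD⟩

/-- the closed neighborhood of a free vertex is a clique-like condition -/
lemma free_adj {V : Type*} (G : SimpleGraph V) (v : V)
    (hfree : ∃! C : Set V, v ∈ C ∧ G.IsClique C ∧ ∀ D : Set V, G.IsClique D → C ⊆ D → D = C)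
    {a b : V} (ha : G.Adj v a) (hb : G.Adj v b) (hab : a ≠ b) : G.Adj a b := by
  obtain ⟨C, hC, huniq⟩ := hfree
  have clique_pair : ∀ w : V, G.Adj v w → ({v, w} : Set V).Pairwise G.Adj := by
    intro w hw
    haveI := G.symm
    rw [Set.pairwise_pair_of_symm]
    intro _; exact hw
  obtain ⟨Ma, hMa1, hMa2, hMa3⟩ := exists_maximal_clique G {v, a} (clique_pair a ha)
  obtain ⟨Mb, hMb1, hMb2, hMb3⟩ := exists_maximal_clique G {v, b} (clique_pair b hb)
  have ea : Ma = C := huniq Ma ⟨hMa1 (Set.mem_insert _ _), hMa2, hMa3⟩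
  have eb : Mb = C := huniq Mb ⟨hMb1 (Set.mem_insert _ _), hMb2, hMb3⟩
  have haC : a ∈ C := ea ▸ hMa1 (Set.mem_insert_of_mem _ rfl)
  have hbC : b ∈ C := eb ▸ hMb1 (Set.mem_insert_of_mem _ rfl)
  exact hC.2.1 haC hbC hab

/-- walk surgery: removing v from walks -/
lemma walk_avoid {V : Type*} (G : SimpleGraph V) (v : V)
    (hclq : ∀ a b : V, G.Adj v a → G.Adj v b → a ≠ b → G.Adj a b)
    (B : Set V) (A : Set V) (hA : A = B \ {v}) :
    ∀ (x y : B) (p : (G.induce B).Walk x y) (hy : y.val ≠ v),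
      (∀ hx : x.val = v, ∃ u : A, G.Adj v u.val ∧
        (G.induce A).Reachable u ⟨y.val, by rw [hA]; exact ⟨y.2, hy⟩⟩) ∧
      (∀ hx : x.val ≠ v, (G.induce A).Reachable ⟨x.val, by rw [hA]; exact ⟨x.2, hx⟩⟩
        ⟨y.val, by rw [hA]; exact ⟨y.2, hy⟩⟩) := by
  intro x y p
  induction p with
  | nil =>
    intro hy
    constructor
    · intro hx; exact absurd hx hy
    · intro _; exact Reachable.refl _
  | @cons x w y h p ih =>
    intro hy
    have hw2 : (w : V) ∈ B := w.2
    by_cases hwv : (w : V) = v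
    · -- middle vertex is v
      have hxv : (x : V) ≠ v := by
        intro hxv
        have h' : G.Adj x.val w.val := h
        rw [hxv, hwv] at h'
        exact h'.ne rfl
      have hvx : G.Adj v x.val := by
        have : G.Adj x.val w.val := h
        rw [hwv] at this; exact this.symm
      obtain ⟨u, huv, hur⟩ := (ih hy).1 hwv
      constructor
      · intro hx; exact absurd hx hxv
      · intro _
        by_cases hxu : (x : V) = u.val
        · have : (⟨x.val, by rw [hA]; exact ⟨x.2, hxv⟩⟩ : A) = u := Subtype.ext hxu
          rw [this]; exact hur
        · have hadj : G.Adj x.val u.val := hclq _ _ hvx huv hxu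
          exact Reachable.trans (Adj.reachable hadj) hur
    · -- middle vertex is not v
      have tail := (ih hy).2 hwv
      constructor
      · intro hx
        refine ⟨⟨w.val, by rw [hA]; exact ⟨w.2, hwv⟩⟩, ?_, tail⟩
        have : G.Adj x.val w.val := h
        rw [hx] at this; exact this
      · intro hx
        have hadj : (G.induce A).Adj ⟨x.val, by rw [hA]; exact ⟨x.2, hx⟩⟩
            ⟨w.val, by rw [hA]; exact ⟨w.2, hwv⟩⟩ := h
        exact Reachable.trans hadj.reachable tail

theorem stmt0 {V : Type*} [Fintype V] [DecidableEq V] (G : SimpleGraph V) (v : V)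
    (hfree : ∃! C : Set V, v ∈ C ∧ G.IsClique C ∧ ∀ D : Set V, G.IsClique D → C ⊆ D → D = C) :
    ∀ S : Finset V, IsCutSet G S → v ∉ S := by
  intro S hcut hvS
  rcases hcut with rfl | ⟨hne, hlt⟩
  · exact absurd hvS (Finset.notMem_empty v)
  have hlt' := hlt v hvS
  -- Sets
  set A : Set V := (↑S : Set V)ᶜ with hAdef
  set B : Set V := (↑(S.erase v) : Set V)ᶜ with hBdef
  have hvA : v ∉ A := by simp [hAdef, hvS]
  have hAB : A = B \ {v} := by
    ext x
    simp only [hAdef, hBdef, Set.mem_compl_iff, Finset.coe_erase, Set.mem_diff,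
      Set.mem_singleton_iff, Finset.mem_coe, Set.mem_compl_iff]
    constructor
    · intro hx
      refine ⟨fun h => hx h.1, fun h => hx (h ▸ hvS)⟩
    · rintro ⟨h1, h2⟩ hx
      exact h1 ⟨hx, h2⟩
  have hsub : A ⊆ B := by rw [hAB]; exact Set.diff_subset
  -- hom from induce A to induce B
  let φ : G.induce A →g G.induce B :=
    ⟨fun a => ⟨a.val, hsub a.2⟩, fun {a b} h => h⟩
  let f : (G.induce A).ConnectedComponent → (G.induce B).ConnectedComponent :=
    ConnectedComponent.map φ
  have hclq : ∀ a b : V, G.Adj v a → G.Adj v b → a ≠ b → G.Adj a b :=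
    fun a b ha hb hab => free_adj G v hfree ha hb hab
  have hinj : Function.Injective f := by
    intro C1 C2 hC
    induction C1 using ConnectedComponent.ind with
    | _ x =>
    induction C2 using ConnectedComponent.ind with
    | _ y =>
    have hreach : (G.induce B).Reachable (φ x) (φ y) := by
      simp only [f, ConnectedComponent.map_mk] at hC
      exact (ConnectedComponent.eq).mp hC
    obtain ⟨p⟩ := hreach
    have hx : (φ x).val ≠ v := fun h => hvA (h ▸ x.2)
    have hy : (φ y).val ≠ v := fun h => hvA (h ▸ y.2)
    have key := (walk_avoid G v hclq B A hAB (φ x) (φ y) p hy).2 hx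
    rw [ConnectedComponent.eq]
    exact key
  have hle : numComp G S ≤ numComp G (S.erase v) :=
    Nat.card_le_card_of_injective f hinj
  omega
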